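/- Let S, S_lin : ℝ^n → ℝ³ (n ≥ 2) be C² maps such that pointwise |S| = 1 and ⟨S, S_lin⟩ = 0, and fix two coordinate indices 1, 2 with partial derivatives ∂₁, ∂₂. Then pointwise one has the identity ⟨S_lin, ∂₁S × ∂₂S⟩ + ⟨S, ∂₁S_lin × ∂₂S⟩ + ⟨S, ∂₁S × ∂₂S_lin⟩ = ∂₁ ⟨S, S_lin × ∂₂S⟩ − ∂₂ ⟨S, S_lin × ∂₁S⟩. -/

import Mathlib

open Matrix

/-- Partial derivative of `f` in the `α`-th coordinate direction. -/
noncomputable def pd {n : ℕ} {E : Type*} [NormedAddCommGroup E] [NormedSpace ℝ E]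
    (f : (Fin n → ℝ) → E) (α : Fin n) (p : Fin n → ℝ) : E :=
  fderiv ℝ f p (Pi.single α 1)

section auxlemmas
variable {n : ℕ} {p : Fin n → ℝ} {i : Fin n}

lemma pd_apply {f : (Fin n → ℝ) → Fin 3 → ℝ} (hf : DifferentiableAt ℝ f p) (j : Fin 3) :
    pd (fun q => f q j) i p = pd f i p j := by
  unfold pd
  have h : fderiv ℝ (fun x j => f x j) p
      = ContinuousLinearMap.pi fun j => fderiv ℝ (fun q => f q j) p :=
    fderiv_pi (fun j => differentiableAt_pi.1 hf j)
  have h' : (fun x (j : Fin 3) => f x j) = f := rfl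
  rw [h'] at h
  rw [h]
  rfl

lemma pd_add {f g : (Fin n → ℝ) → ℝ} (hf : DifferentiableAt ℝ f p)
    (hg : DifferentiableAt ℝ g p) :
    pd (fun q => f q + g q) i p = pd f i p + pd g i p := by
  unfold pd; rw [fderiv_fun_add hf hg]; rfl

lemma pd_sub {f g : (Fin n → ℝ) → ℝ} (hf : DifferentiableAt ℝ f p)
    (hg : DifferentiableAt ℝ g p) :
    pd (fun q => f q - g q) i p = pd f i p - pd g i p := by
  unfold pd; rw [fderiv_fun_sub hf hg]; rfl

lemma pd_mul {f g : (Fin n → ℝ) → ℝ} (hf : DifferentiableAt ℝ f p)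
    (hg : DifferentiableAt ℝ g p) :
    pd (fun q => f q * g q) i p = pd f i p * g p + f p * pd g i p := by
  unfold pd; rw [fderiv_fun_mul hf hg]; simp; ring

lemma pd_mul3 {u v w : (Fin n → ℝ) → ℝ} (hu : DifferentiableAt ℝ u p)
    (hv : DifferentiableAt ℝ v p) (hw : DifferentiableAt ℝ w p) :
    pd (fun q => u q * v q * w q) i p
      = pd u i p * v p * w p + u p * pd v i p * w p + u p * v p * pd w i p := by
  rw [pd_mul (f := fun q => u q * v q) (hu.mul hv) hw, pd_mul hu hv]; ring

lemma pd_dot {f g : (Fin n → ℝ) → Fin 3 → ℝ} (hf : DifferentiableAt ℝ f p)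
    (hg : DifferentiableAt ℝ g p) :
    pd (fun q => f q ⬝ᵥ g q) i p = pd f i p ⬝ᵥ g p + f p ⬝ᵥ pd g i p := by
  have e : (fun q => f q ⬝ᵥ g q)
      = fun q => f q 0 * g q 0 + (f q 1 * g q 1 + f q 2 * g q 2) := by
    funext q; simp [dotProduct, Fin.sum_univ_three]; ring
  rw [e, pd_add (by fun_prop) (by fun_prop), pd_add (by fun_prop) (by fun_prop),
    pd_mul (by fun_prop) (by fun_prop), pd_mul (by fun_prop) (by fun_prop),
    pd_mul (by fun_prop) (by fun_prop)]
  simp [dotProduct, Fin.sum_univ_three, pd_apply hf, pd_apply hg]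
  ring

lemma pd_dot_cross {f g h : (Fin n → ℝ) → Fin 3 → ℝ} (hf : DifferentiableAt ℝ f p)
    (hg : DifferentiableAt ℝ g p) (hh : DifferentiableAt ℝ h p) :
    pd (fun q => f q ⬝ᵥ crossProduct (g q) (h q)) i p
      = pd f i p ⬝ᵥ crossProduct (g p) (h p)
        + f p ⬝ᵥ crossProduct (pd g i p) (h p)
        + f p ⬝ᵥ crossProduct (g p) (pd h i p) := by
  have e : (fun q => f q ⬝ᵥ crossProduct (g q) (h q))
      = fun q => (f q 0 * g q 1 * h q 2 - f q 0 * g q 2 * h q 1)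
          + ((f q 1 * g q 2 * h q 0 - f q 1 * g q 0 * h q 2)
          + (f q 2 * g q 0 * h q 1 - f q 2 * g q 1 * h q 0)) := by
    funext q; simp [crossProduct, dotProduct, Fin.sum_univ_three]; ring
  rw [e, pd_add (by fun_prop) (by fun_prop), pd_add (by fun_prop) (by fun_prop),
    pd_sub (by fun_prop) (by fun_prop), pd_sub (by fun_prop) (by fun_prop),
    pd_sub (by fun_prop) (by fun_prop),
    pd_mul3 (by fun_prop) (by fun_prop) (by fun_prop),
    pd_mul3 (by fun_prop) (by fun_prop) (by fun_prop),
    pd_mul3 (by fun_prop) (by fun_prop) (by fun_prop),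
    pd_mul3 (by fun_prop) (by fun_prop) (by fun_prop),
    pd_mul3 (by fun_prop) (by fun_prop) (by fun_prop),
    pd_mul3 (by fun_prop) (by fun_prop) (by fun_prop)]
  simp [crossProduct, dotProduct, Fin.sum_univ_three, pd_apply hf, pd_apply hg, pd_apply hh]
  ring

end auxlemmas

/-- Divergence-form identity for the right-hand side of the linearized Poisson
equation of the Ishimori system:
`⟨S_lin, ∂₁S × ∂₂S⟩ + ⟨S, ∂₁S_lin × ∂₂S⟩ + ⟨S, ∂₁S × ∂₂S_lin⟩
  = ∂₁⟨S, S_lin × ∂₂S⟩ − ∂₂⟨S, S_lin × ∂₁S⟩`. -/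
theorem linearized_charge_density_divergence_form {n : ℕ} (hn : 2 ≤ n)
    (S Slin : (Fin n → ℝ) → Fin 3 → ℝ)
    (hS : ContDiff ℝ 2 S) (hSlin : ContDiff ℝ 2 Slin)
    (hS1 : ∀ p, S p ⬝ᵥ S p = 1)
    (hortho : ∀ p, S p ⬝ᵥ Slin p = 0)
    (i₁ i₂ : Fin n) (hi₁ : (i₁ : ℕ) = 0) (hi₂ : (i₂ : ℕ) = 1) :
    ∀ p : Fin n → ℝ,
      Slin p ⬝ᵥ crossProduct (pd S i₁ p) (pd S i₂ p)
        + S p ⬝ᵥ crossProduct (pd Slin i₁ p) (pd S i₂ p)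
        + S p ⬝ᵥ crossProduct (pd S i₁ p) (pd Slin i₂ p) =
      pd (fun q => S q ⬝ᵥ crossProduct (Slin q) (pd S i₂ q)) i₁ p
        - pd (fun q => S q ⬝ᵥ crossProduct (Slin q) (pd S i₁ q)) i₂ p := by
  intro p
  have hSd : Differentiable ℝ S := hS.differentiable two_ne_zero
  have hLd : Differentiable ℝ Slin := hSlin.differentiable two_ne_zero
  have hfd : ContDiff ℝ 1 (fderiv ℝ S) := hS.fderiv_right (le_refl 2)
  have hg : ∀ i : Fin n, Differentiable ℝ (fun q => pd S i q) :=
    fun i => ((hfd.clm_apply contDiff_const).differentiable one_ne_zero : _)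
  -- symmetry of second derivatives
  have hsymm : pd (fun q => pd S i₂ q) i₁ p = pd (fun q => pd S i₁ q) i₂ p := by
    have h1 : ∀ i j : Fin n, pd (fun q => pd S j q) i p
        = fderiv ℝ (fderiv ℝ S) p (Pi.single i 1) (Pi.single j 1) := by
      intro i j
      unfold pd
      rw [fderiv_clm_apply (hfd.differentiable one_ne_zero p) (differentiableAt_const _)]
      simp
    rw [h1, h1]
    exact second_derivative_symmetric (fun y => (hSd y).hasFDerivAt)
      ((hfd.differentiable one_ne_zero p).hasFDerivAt) _ _
  -- S is orthogonal to its partial derivatives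
  have horth : ∀ i : Fin n, S p ⬝ᵥ pd S i p = 0 := by
    intro i
    have h0 : pd (fun q => S q ⬝ᵥ S q) i p = 0 := by
      have hc : (fun q => S q ⬝ᵥ S q) = fun _ => (1 : ℝ) := funext hS1
      rw [hc]; unfold pd; simp
    rw [pd_dot (hSd p) (hSd p), dotProduct_comm (pd S i p)] at h0
    linarith
  rw [pd_dot_cross (hSd p) (hLd p) (hg i₂ p), pd_dot_cross (hSd p) (hLd p) (hg i₁ p), hsymm]
  have h1 := hS1 p
  have h2 := hortho p
  have h3 := horth i₁
  have h4 := horth i₂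
  set s := S p
  set l := Slin p
  set a := pd S i₁ p
  set b := pd S i₂ p
  set la := pd Slin i₁ p
  set lb := pd Slin i₂ p
  set c := pd (fun q => pd S i₁ q) i₂ p
  simp only [crossProduct, dotProduct, Fin.sum_univ_three, LinearMap.mk₂_apply,
    Matrix.cons_val_zero, Matrix.cons_val_one, Matrix.head_cons,
    Matrix.cons_val_two, Matrix.tail_cons] at h1 h2 h3 h4 ⊢
  linear_combination
    (-3 * (l 0 * (a 1 * b 2 - a 2 * b 1) + l 1 * (a 2 * b 0 - a 0 * b 2)
      + l 2 * (a 0 * b 1 - a 1 * b 0))) * h1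
    + (3 * (s 0 * (a 1 * b 2 - a 2 * b 1) + s 1 * (a 2 * b 0 - a 0 * b 2)
      + s 2 * (a 0 * b 1 - a 1 * b 0))) * h2
    + (-3 * ((s 1 * l 2 - s 2 * l 1) * b 0 + (s 2 * l 0 - s 0 * l 2) * b 1
      + (s 0 * l 1 - s 1 * l 0) * b 2)) * h3
    + (3 * ((s 1 * l 2 - s 2 * l 1) * a 0 + (s 2 * l 0 - s 0 * l 2) * a 1
      + (s 0 * l 1 - s 1 * l 0) * a 2)) * h4
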